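/- If a graph H is Sidorenko (i.e., t(H,W) ≥ t(K₂,W)^{e(H)} for every graphon W), then for every integer k ≥ 2 and all graphons W₁,…,W_k with W₁+⋯+W_k = 1 (the constant-1 graphon), one has t(H,W₁)+⋯+t(H,W_k) ≥ k^{-e(H)+1}. In other words, every Sidorenko graph is k-common for every k ≥ 2. -/

import Mathlib

open MeasureTheory

noncomputable section

/-- The Lebesgue measure restricted to `[0,1]`. -/
abbrev muI : Measure ℝ := volume.restrict (Set.Icc 0 1)

/-- A graphon: a symmetric measurable function `[0,1]² → [0,1]`
(represented as a function on `ℝ²`). -/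
def IsGraphon (W : ℝ → ℝ → ℝ) : Prop :=
  Measurable (Function.uncurry W) ∧ (∀ x y, W x y = W y x) ∧
    (∀ x y, W x y ∈ Set.Icc (0:ℝ) 1)

/-- The edges of a graph on `Fin m`, each listed once as an ordered pair. -/
def edgeFinset' {m : ℕ} (G : SimpleGraph (Fin m)) [DecidableRel G.Adj] :
    Finset (Fin m × Fin m) :=
  Finset.univ.filter fun p => p.1 < p.2 ∧ G.Adj p.1 p.2

/-- The number of edges of `G`. -/
def edgeCount {m : ℕ} (G : SimpleGraph (Fin m)) [DecidableRel G.Adj] : ℕ :=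
  (edgeFinset' G).card

/-- The homomorphism density `t(G, W)`. -/
def homDensity {m : ℕ} (G : SimpleGraph (Fin m)) [DecidableRel G.Adj]
    (W : ℝ → ℝ → ℝ) : ℝ :=
  ∫ x : Fin m → ℝ, ∏ p ∈ edgeFinset' G, W (x p.1) (x p.2)
    ∂(Measure.pi fun _ => muI)

/-- The single-edge graph `K₂`. -/
abbrev K2 : SimpleGraph (Fin 2) := ⊤

/-- The complete bipartite graph `K_{a,b}` on `Fin (a+b)`. -/
def bip (a b : ℕ) : SimpleGraph (Fin (a + b)) where
  Adj i j := (decide (i.val < a)) ≠ (decide (j.val < a))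
  symm := ⟨fun _ _ h => Ne.symm h⟩
  loopless := ⟨fun _ h => h rfl⟩

instance (a b : ℕ) : DecidableRel (bip a b).Adj :=
  fun i j => inferInstanceAs (Decidable (_ ≠ _))

/-- The cycle `C_n` on `Fin n` (for `n ≥ 3`). -/
def cyc (n : ℕ) : SimpleGraph (Fin n) where
  Adj i j := i ≠ j ∧ ((i.val + 1) % n = j.val ∨ (j.val + 1) % n = i.val)
  symm := ⟨fun _ _ h => ⟨h.1.symm, h.2.symm⟩⟩
  loopless := ⟨fun _ h => h.1 rfl⟩

instance (n : ℕ) : DecidableRel (cyc n).Adj :=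
  fun i j => inferInstanceAs (Decidable (_ ∧ _))

/-- Every Sidorenko graph is k-common for every k ≥ 2. -/
theorem sidorenko_implies_kCommon {m : ℕ} (H : SimpleGraph (Fin m))
    [DecidableRel H.Adj]
    (hSid : ∀ W : ℝ → ℝ → ℝ, IsGraphon W →
      homDensity K2 W ^ edgeCount H ≤ homDensity H W)
    (k : ℕ) (hk : 2 ≤ k) (W : Fin k → ℝ → ℝ → ℝ)
    (hW : ∀ i, IsGraphon (W i)) (hsum : ∀ x y, ∑ i, W i x y = 1) :
    (k : ℝ) ^ (1 - (edgeCount H : ℤ)) ≤ ∑ i, homDensity H (W i) := by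
  have hk0 : (0:ℝ) < (k:ℝ) := by positivity
  set d : Fin k → ℝ := fun i => homDensity K2 (W i) with hd
  -- edge set of K2
  have hedge : edgeFinset' K2 = {((0 : Fin 2), (1 : Fin 2))} := by decide
  -- each summand integrand
  haveI : IsProbabilityMeasure muI := ⟨by simp⟩
  have hmeas : ∀ i, Measurable fun x : Fin 2 → ℝ => W i (x 0) (x 1) := by
    intro i
    show Measurable fun x : Fin 2 → ℝ => Function.uncurry (W i) (x 0, x 1)
    exact (hW i).1.comp ((measurable_pi_apply 0).prodMk (measurable_pi_apply 1))
  have hint : ∀ i, Integrable (fun x : Fin 2 → ℝ => W i (x 0) (x 1))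
      (Measure.pi fun _ => muI) := by
    intro i
    refine ⟨(hmeas i).aestronglyMeasurable, ?_⟩
    refine HasFiniteIntegral.of_bounded (C := 1) (.of_forall fun x => ?_)
    have := (hW i).2.2 (x 0) (x 1)
    rw [Real.norm_eq_abs, abs_le]
    constructor <;> linarith [this.1, this.2]
  have hdeq : ∀ i, d i = ∫ x : Fin 2 → ℝ, W i (x 0) (x 1)
      ∂(Measure.pi fun _ => muI) := by
    intro i
    simp [hd, homDensity, hedge]
  -- sum of edge densities is 1
  have hsumd : ∑ i, d i = 1 := by
    have : ∑ i, d i = ∫ x : Fin 2 → ℝ, ∑ i, W i (x 0) (x 1)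
        ∂(Measure.pi fun _ => muI) := by
      rw [integral_finset_sum _ fun i _ => hint i]
      exact Finset.sum_congr rfl fun i _ => hdeq i
    rw [this]
    have h1 : ∀ x : Fin 2 → ℝ, ∑ i, W i (x 0) (x 1) = 1 := fun x => hsum _ _
    simp only [h1]
    simp
  have hdnn : ∀ i, 0 ≤ d i := by
    intro i
    rw [hdeq i]
    exact integral_nonneg fun x => ((hW i).2.2 _ _).1
  have hmain : ∀ i, d i ^ edgeCount H ≤ homDensity H (W i) := fun i => hSid _ (hW i)
  calc (k : ℝ) ^ (1 - (edgeCount H : ℤ)) ≤ ∑ i, d i ^ edgeCount H := by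
        rcases Nat.eq_zero_or_pos (edgeCount H) with h0 | hpos
        · simp [h0]
        · obtain ⟨n, hn⟩ : ∃ n, edgeCount H = n + 1 :=
            ⟨edgeCount H - 1, (Nat.succ_pred_eq_of_pos hpos).symm⟩
          rw [hn]
          have := pow_sum_div_card_le_sum_pow (s := (Finset.univ : Finset (Fin k)))
            (f := d) (fun i _ => hdnn i) n
          rw [hsumd] at this
          refine le_trans (le_of_eq ?_) this
          have he : (1 - ((n : ℤ) + 1)) = -(n : ℤ) := by ring
          push_cast
          rw [he, zpow_neg, zpow_natCast]
          simp [Finset.card_univ]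
      _ ≤ ∑ i, homDensity H (W i) := Finset.sum_le_sum fun i _ => hmain i
end
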